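/- Let p be a prime and k a nonnegative integer with base-p digits k_0,...,k_r (each between 0 and p-1). Then the central binomial coefficient C(2k, k) is divisible by p if and only if some digit k_i satisfies k_i > (p-1)/2. -/

import Mathlib

/-- A number has a base-`p` digit exceeding `c` iff some truncated quotient's
remainder mod `p` exceeds `c`. -/
theorem exists_digit_gt_iff (p : ℕ) (hp : 1 < p) (c k : ℕ) :
    (∃ d ∈ Nat.digits p k, c < d) ↔ ∃ j, c < k / p ^ j % p := by
  induction k using Nat.strong_induction_on with
  | _ k ih =>
    rcases eq_or_ne k 0 with rfl | hk
    · simp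
    · rw [Nat.digits_def' hp (Nat.pos_of_ne_zero hk)]
      have hdiv : k / p < k := Nat.div_lt_self (Nat.pos_of_ne_zero hk) hp
      simp only [List.mem_cons]
      constructor
      · rintro ⟨d, hd | hd, hcd⟩
        · exact ⟨0, by simpa [hd] using hcd⟩
        · obtain ⟨j, hj⟩ := (ih _ hdiv).mp ⟨d, hd, hcd⟩
          exact ⟨j + 1, by rw [pow_succ', ← Nat.div_div_eq_div_mul]; exact hj⟩
      · rintro ⟨j, hj⟩
        rcases j with _ | j
        · exact ⟨k % p, Or.inl rfl, by simpa using hj⟩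
        · rw [pow_succ', ← Nat.div_div_eq_div_mul] at hj
          obtain ⟨d, hd, hcd⟩ := (ih _ hdiv).mpr ⟨j, hj⟩
          exact ⟨d, Or.inr hd, hcd⟩

/-- For a prime `p` and `k : ℕ`, `p` divides the central binomial coefficient
`C(2k, k)` iff some base-`p` digit of `k` exceeds `(p-1)/2`. -/
theorem central_binom_dvd_iff_digit_large (p : ℕ) (hp : p.Prime) (k : ℕ) :
    p ∣ Nat.choose (2 * k) k ↔ ∃ d ∈ Nat.digits p k, (p - 1) / 2 < d := by
  haveI : Fact p.Prime := ⟨hp⟩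
  have hp1 : 1 < p := hp.one_lt
  have hpos : 0 < (2 * k).choose k := Nat.choose_pos (by omega)
  set b := Nat.log p (2 * k) + 1 with hb
  have key : padicValNat p ((2 * k).choose k) =
      ((Finset.Ico 1 b).filter fun i => p ^ i ≤ k % p ^ i + k % p ^ i).card := by
    have h2 : 2 * k = k + k := by ring
    rw [h2]
    exact padicValNat_choose' (by rw [← h2]; omega)
  have hdvd : p ∣ (2 * k).choose k ↔
      ∃ i, 1 ≤ i ∧ i < b ∧ p ^ i ≤ k % p ^ i + k % p ^ i := by
    rw [dvd_iff_padicValNat_ne_zero hpos.ne', key]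
    simp only [← Finset.card_pos, Finset.card_pos, ne_eq, Finset.card_eq_zero,
      ← Finset.nonempty_iff_ne_empty, Finset.filter_nonempty_iff, Finset.mem_Ico]
    constructor
    · rintro ⟨i, ⟨h1, h2⟩, h3⟩; exact ⟨i, h1, h2, h3⟩
    · rintro ⟨i, h1, h2, h3⟩; exact ⟨i, ⟨h1, h2⟩, h3⟩
  rw [hdvd, exists_digit_gt_iff p hp1]
  constructor
  · rintro ⟨i, hi1, hib, hile⟩
    classical
    have hP : ∃ i, 1 ≤ i ∧ p ^ i ≤ k % p ^ i + k % p ^ i := ⟨i, hi1, hile⟩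
    obtain ⟨hm1, hmle⟩ := Nat.find_spec hP
    set m := Nat.find hP with hm
    set j := m - 1 with hjdef
    have hmj : m = j + 1 := by omega
    have hprev : k % p ^ j + k % p ^ j < p ^ j := by
      rcases Nat.eq_zero_or_pos j with h0 | hjpos
      · rw [h0]; simp [Nat.mod_one]
      · have hmin := Nat.find_min hP (show j < m by omega)
        simp only [not_and, not_le] at hmin
        exact hmin hjpos
    set d := k / p ^ j % p with hd
    have hmod : k % p ^ m = k % p ^ j + p ^ j * d := by
      rw [hmj, pow_succ, Nat.mod_mul]
    have hpm : p ^ m = p ^ j * p := by rw [hmj, pow_succ]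
    have hpd : p ≤ 2 * d := by
      by_contra h
      push_neg at h
      have h1 : p ^ j * (2 * d + 1) ≤ p ^ j * p := Nat.mul_le_mul_left _ (by omega)
      have h2 : p ^ j * (2 * d + 1) = 2 * (p ^ j * d) + p ^ j := by ring
      rw [hmod] at hmle
      rw [hpm] at hmle
      omega
    exact ⟨j, by omega⟩
  · rintro ⟨j, hj⟩
    set d := k / p ^ j % p with hd
    have h2d : p ≤ 2 * d := by omega
    have hkj : p ^ j ≤ k := by
      rcases Nat.lt_or_ge k (p ^ j) with h | h
      · rw [Nat.div_eq_of_lt h, Nat.zero_mod] at hd; omega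
      · exact h
    have hkpos : 0 < k := lt_of_lt_of_le (pow_pos (by omega) j) hkj
    have hmod : k % p ^ (j + 1) = k % p ^ j + p ^ j * d := by
      rw [pow_succ, Nat.mod_mul]
    have hle : p ^ (j + 1) ≤ k % p ^ (j + 1) + k % p ^ (j + 1) := by
      rw [hmod, pow_succ]
      calc p ^ j * p ≤ p ^ j * (2 * d) := Nat.mul_le_mul_left _ h2d
        _ ≤ (k % p ^ j + p ^ j * d) + (k % p ^ j + p ^ j * d) := by ring_nf; omega
    have hbnd : j + 1 < b := by
      have h2k : p ^ (j + 1) ≤ 2 * k := le_trans hle (by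
        have := Nat.mod_le k (p ^ (j + 1)); omega)
      have : j + 1 ≤ Nat.log p (2 * k) :=
        (Nat.le_log_iff_pow_le hp1 (by omega)).mpr h2k
      omega
    exact ⟨j + 1, by omega, hbnd, hle⟩
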